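/- For each of the stress spaces S¹_□, S²_□, S³_□ on the reference square (−1,1)² defined in the Hu-Washizu formulation, the 'C-compatible' subspace S^c = {τ ∈ S_□ : C τ ∈ S_□} (where C is a linear elasticity tensor with Lamé coefficients (λ, μ), λ ≠ 0) consists only of matrix fields with constant trace; i.e. if τ ∈ S_□ and C τ ∈ S_□ then tr(τ) is a constant function on (−1,1)². -/
import Mathlib


open Matrix

/-- Action of the linear elasticity tensor with Lamé coefficients `(lam, mu)`
on a `2 × 2` matrix. -/
noncomputable def elasTensor (lam mu : ℝ) (τ : Matrix (Fin 2) (Fin 2) ℝ) :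
    Matrix (Fin 2) (Fin 2) ℝ :=
  (lam * Matrix.trace τ) • (1 : Matrix (Fin 2) (Fin 2) ℝ) + (2 * mu) • τ

/-- Membership in the stress space `S¹_□`: entry (1,1) ∈ span{1, ŷ},
off-diagonal entries constant, entry (2,2) ∈ span{1, x̂}. -/
def memS1 (τ : ℝ → ℝ → Matrix (Fin 2) (Fin 2) ℝ) : Prop :=
  ∃ a₀ a₁ b₀ c₀ e₀ e₁ : ℝ, ∀ x y : ℝ,
    τ x y = !![a₀ + a₁ * y, b₀; c₀, e₀ + e₁ * x]

/-- Membership in the stress space `S²_□`: entry (1,1) ∈ span{1, ŷ},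
off-diagonal entries ∈ span{1, x̂, ŷ}, entry (2,2) ∈ span{1, x̂}. -/
def memS2 (τ : ℝ → ℝ → Matrix (Fin 2) (Fin 2) ℝ) : Prop :=
  ∃ a₀ a₁ b₀ b₁ b₂ c₀ c₁ c₂ e₀ e₁ : ℝ, ∀ x y : ℝ,
    τ x y = !![a₀ + a₁ * y, b₀ + b₁ * x + b₂ * y;
               c₀ + c₁ * x + c₂ * y, e₀ + e₁ * x]

/-- Membership in the stress space `S³_□`: diagonal entries constant,
off-diagonal entries ∈ span{1, x̂, ŷ}. -/
def memS3 (τ : ℝ → ℝ → Matrix (Fin 2) (Fin 2) ℝ) : Prop :=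
  ∃ a₀ b₀ b₁ b₂ c₀ c₁ c₂ e₀ : ℝ, ∀ x y : ℝ,
    τ x y = !![a₀, b₀ + b₁ * x + b₂ * y; c₀ + c₁ * x + c₂ * y, e₀]

/-- For each of the stress spaces `Sⁱ_□`, elements of the `C`-compatible
subspace `S^c = {τ ∈ S_□ : C τ ∈ S_□}` have constant trace on `(−1,1)²`. -/
theorem compatible_subspace_has_constant_trace (lam mu : ℝ) (hlam : lam ≠ 0)
    (τ : ℝ → ℝ → Matrix (Fin 2) (Fin 2) ℝ) :
    (memS1 τ → memS1 (fun x y => elasTensor lam mu (τ x y)) →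
      ∃ c : ℝ, ∀ x y : ℝ, x ∈ Set.Ioo (-1 : ℝ) 1 → y ∈ Set.Ioo (-1 : ℝ) 1 →
        Matrix.trace (τ x y) = c) ∧
    (memS2 τ → memS2 (fun x y => elasTensor lam mu (τ x y)) →
      ∃ c : ℝ, ∀ x y : ℝ, x ∈ Set.Ioo (-1 : ℝ) 1 → y ∈ Set.Ioo (-1 : ℝ) 1 →
        Matrix.trace (τ x y) = c) ∧
    (memS3 τ → memS3 (fun x y => elasTensor lam mu (τ x y)) →
      ∃ c : ℝ, ∀ x y : ℝ, x ∈ Set.Ioo (-1 : ℝ) 1 → y ∈ Set.Ioo (-1 : ℝ) 1 →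
        Matrix.trace (τ x y) = c) := by
  refine ⟨?_, ?_, ?_⟩
  · rintro ⟨a₀, a₁, b₀, c₀, e₀, e₁, h⟩ ⟨A₀, A₁, B₀, C₀, E₀, E₁, h'⟩
    have key : ∀ x y : ℝ, elasTensor lam mu (τ x y) = !![A₀ + A₁ * y, B₀; C₀, E₀ + E₁ * x] := h'
    -- entry (0,0) at (0,0) and (1,0) gives lam * e₁ = 0
    have g : ∀ x y : ℝ,
        lam * (a₀ + a₁ * y + (e₀ + e₁ * x)) + 2 * mu * (a₀ + a₁ * y) = A₀ + A₁ * y := by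
      intro x y
      have := Matrix.ext_iff.2 (key x y) 0 0
      simpa [elasTensor, h, Matrix.trace, Fin.sum_univ_two, Matrix.one_apply] using this
    have g' : ∀ x y : ℝ,
        lam * (a₀ + a₁ * y + (e₀ + e₁ * x)) + 2 * mu * (e₀ + e₁ * x) = E₀ + E₁ * x := by
      intro x y
      have := Matrix.ext_iff.2 (key x y) 1 1
      simpa [elasTensor, h, Matrix.trace, Fin.sum_univ_two, Matrix.one_apply] using this
    have he₁ : e₁ = 0 := by
      have h1 := g 0 0; have h2 := g 1 0
      have : lam * e₁ = 0 := by linarith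
      exact by
        rcases mul_eq_zero.1 this with hc | hc
        · exact absurd hc hlam
        · exact hc
    have ha₁ : a₁ = 0 := by
      have h1 := g' 0 0; have h2 := g' 0 1
      have : lam * a₁ = 0 := by linarith
      exact by
        rcases mul_eq_zero.1 this with hc | hc
        · exact absurd hc hlam
        · exact hc
    refine ⟨a₀ + e₀, fun x y _ _ => ?_⟩
    simp [h, Matrix.trace, Fin.sum_univ_two, he₁, ha₁]
  · rintro ⟨a₀, a₁, b₀, b₁, b₂, c₀, c₁, c₂, e₀, e₁, h⟩
      ⟨A₀, A₁, B₀, B₁, B₂, C₀, C₁, C₂, E₀, E₁, h'⟩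
    have key : ∀ x y : ℝ, elasTensor lam mu (τ x y) =
        !![A₀ + A₁ * y, B₀ + B₁ * x + B₂ * y; C₀ + C₁ * x + C₂ * y, E₀ + E₁ * x] := h'
    have g : ∀ x y : ℝ,
        lam * (a₀ + a₁ * y + (e₀ + e₁ * x)) + 2 * mu * (a₀ + a₁ * y) = A₀ + A₁ * y := by
      intro x y
      have := Matrix.ext_iff.2 (key x y) 0 0
      simpa [elasTensor, h, Matrix.trace, Fin.sum_univ_two, Matrix.one_apply] using this
    have g' : ∀ x y : ℝ,
        lam * (a₀ + a₁ * y + (e₀ + e₁ * x)) + 2 * mu * (e₀ + e₁ * x) = E₀ + E₁ * x := by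
      intro x y
      have := Matrix.ext_iff.2 (key x y) 1 1
      simpa [elasTensor, h, Matrix.trace, Fin.sum_univ_two, Matrix.one_apply] using this
    have he₁ : e₁ = 0 := by
      have h1 := g 0 0; have h2 := g 1 0
      have : lam * e₁ = 0 := by linarith
      rcases mul_eq_zero.1 this with hc | hc
      · exact absurd hc hlam
      · exact hc
    have ha₁ : a₁ = 0 := by
      have h1 := g' 0 0; have h2 := g' 0 1
      have : lam * a₁ = 0 := by linarith
      rcases mul_eq_zero.1 this with hc | hc
      · exact absurd hc hlam
      · exact hc
    refine ⟨a₀ + e₀, fun x y _ _ => ?_⟩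
    simp [h, Matrix.trace, Fin.sum_univ_two, he₁, ha₁]
  · rintro ⟨a₀, b₀, b₁, b₂, c₀, c₁, c₂, e₀, h⟩ -
    refine ⟨a₀ + e₀, fun x y _ _ => ?_⟩
    simp [h, Matrix.trace, Fin.sum_univ_two]
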